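/- Let γ ≥ 1 and let the coefficients C^h_k be defined by C^h_0 = 0 for h ≥ 2, C^1_0 = 1, and the recursion C^h_k = γ C^h_{k-1} + ∑_{h₂=1}^{h-1} C^{h-h₂}_{k-1} C^{h₂}_{k-1} (with C^h_k = 0 for h < 1). Then for all k ≥ 1 and h ≥ 1, C^h_k ≤ k^{h-1} γ^{kh}. -/

import Mathlib

open Finset

lemma aux_binom_stmt7 (m k : ℕ) : k ^ m + m * k ^ (m - 1) ≤ (k + 1) ^ m := by
  induction m with
  | zero => simp
  | succ m ih =>
    rcases Nat.eq_zero_or_pos m with hm | hm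
    · subst hm; simp [pow_succ]
    · have hkm : k * k ^ (m - 1) = k ^ m := by
        have hme : m - 1 + 1 = m := by omega
        calc k * k ^ (m - 1) = k ^ (m - 1 + 1) := by rw [pow_succ]; ring
          _ = k ^ m := by rw [hme]
      have h2 : (k + 1) * (k ^ m + m * k ^ (m - 1)) ≤ (k + 1) ^ (m + 1) := by
        rw [pow_succ, mul_comm ((k+1)^m) (k+1)]
        exact Nat.mul_le_mul_left _ ih
      refine le_trans ?_ h2
      have hexp : (k + 1) * (k ^ m + m * k ^ (m - 1))
          = k ^ (m+1) + m * (k * k^(m-1)) + (k ^ m + m * k ^ (m-1)) := by ring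
      rw [hexp, hkm]
      have h3 : k ^ (m + 1 - 1) = k ^ m := by simp
      rw [h3]
      nlinarith [Nat.zero_le (m * k ^ (m-1))]

/-- Bound `C^h_k ≤ k^{h-1} γ^{kh}` for `γ ≥ 1` on the coefficients of the iterated
quadratic recursion. -/
theorem stmt_7 (γ : ℝ) (hγ : 1 ≤ γ) (C : ℕ → ℕ → ℝ)
    (h01 : C 0 1 = 1) (h0h : ∀ h, 2 ≤ h → C 0 h = 0) (hz : ∀ k, C k 0 = 0)
    (hrec : ∀ k h, 1 ≤ h →
      C (k + 1) h = γ * C k h + ∑ h₂ ∈ Finset.Ico 1 h, C k (h - h₂) * C k h₂) :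
    ∀ k h : ℕ, 1 ≤ k → 1 ≤ h → C k h ≤ (k : ℝ) ^ (h - 1) * γ ^ (k * h) := by
  have hγ0 : (0:ℝ) ≤ γ := le_trans zero_le_one hγ
  have Cnn : ∀ k h, 0 ≤ C k h := by
    intro k
    induction k with
    | zero =>
      intro h
      match h with
      | 0 => rw [hz]
      | 1 => rw [h01]; norm_num
      | (n+2) => rw [h0h (n+2) (by omega)]
    | succ k ih =>
      intro h
      match h with
      | 0 => rw [hz]
      | (n+1) =>
        rw [hrec k (n+1) (by omega)]
        have hs : 0 ≤ ∑ h₂ ∈ Finset.Ico 1 (n+1), C k ((n+1) - h₂) * C k h₂ :=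
          Finset.sum_nonneg fun i _ => mul_nonneg (ih _) (ih _)
        have := mul_nonneg hγ0 (ih (n+1))
        linarith
  intro k h hk hh
  induction k, hk using Nat.le_induction generalizing h with
  | base =>
    rw [hrec 0 h hh]
    match h, hh with
    | 1, _ =>
      simp [h01]
    | 2, _ =>
      rw [h0h 2 (by omega)]
      have : Finset.Ico 1 2 = {1} := rfl
      rw [this]
      simp only [Finset.sum_singleton, h01]
      norm_num
      exact le_trans hγ (le_abs_self γ)
    | (n+3), _ =>
      rw [h0h (n+3) (by omega)]
      have hs : ∑ h₂ ∈ Finset.Ico 1 (n+3), C 0 ((n+3) - h₂) * C 0 h₂ = 0 := by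
        apply Finset.sum_eq_zero
        intro i hi
        simp only [Finset.mem_Ico] at hi
        rcases Nat.eq_or_lt_of_le hi.1 with h1 | h1
        · rw [← h1, h0h (n+3-1) (by omega), zero_mul]
        · rw [h0h i (by omega), mul_zero]
      rw [hs]
      norm_num
      positivity
  | succ k hk ih =>
    rw [hrec k h hh]
    have hkR : (0:ℝ) ≤ (k:ℝ) := Nat.cast_nonneg k
    match h, hh with
    | 1, _ =>
      simp only [Finset.Ico_self, Finset.sum_empty, add_zero]
      have := ih 1 le_rfl
      simp only [Nat.sub_self, pow_zero, one_mul, Nat.mul_one] at this ⊢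
      calc γ * C k 1 ≤ γ * γ ^ k := by
            exact mul_le_mul_of_nonneg_left this hγ0
        _ = γ ^ (k+1) := by rw [pow_succ]; ring
    | (n+2), _ =>
      set h : ℕ := n + 2 with hdef
      have hh2 : 2 ≤ h := by omega
      -- bound each summand
      have hterm : ∀ i ∈ Finset.Ico 1 h,
          C k (h - i) * C k i ≤ (k:ℝ)^(h-2) * γ^(k*h) := by
        intro i hi
        simp only [Finset.mem_Ico] at hi
        have ha1 : 1 ≤ h - i := by omega
        have B1 := ih (h - i) ha1
        have B2 := ih i hi.1
        have hmul : C k (h - i) * C k i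
            ≤ ((k:ℝ)^(h-i-1) * γ^(k*(h-i))) * ((k:ℝ)^(i-1) * γ^(k*i)) :=
          mul_le_mul B1 B2 (Cnn k i) (by positivity)
        refine hmul.trans (le_of_eq ?_)
        rw [show h - 2 = (h-i-1) + (i-1) by omega,
            show k*h = k*(h-i) + k*i by
              have : (h - i) + i = h := by omega
              nlinarith [this],
            pow_add, pow_add]
        ring
      have hsum : ∑ h₂ ∈ Finset.Ico 1 h, C k (h - h₂) * C k h₂
          ≤ (h - 1 : ℕ) * ((k:ℝ)^(h-2) * γ^(k*h)) := by
        have := Finset.sum_le_card_nsmul (Finset.Ico 1 h) _ _ hterm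
        rwa [Nat.card_Ico, nsmul_eq_mul] at this
      have hγC : γ * C k h ≤ (k:ℝ)^(h-1) * γ^(k*h+1) := by
        have := mul_le_mul_of_nonneg_left (ih h (by omega)) hγ0
        calc γ * C k h ≤ γ * ((k:ℝ)^(h-1) * γ^(k*h)) := this
          _ = (k:ℝ)^(h-1) * γ^(k*h+1) := by rw [pow_succ]; ring
      have hγmono : γ^(k*h) ≤ γ^(k*h+1) := pow_le_pow_right₀ hγ (by omega)
      have hγmono2 : γ^(k*h+1) ≤ γ^((k+1)*h) := pow_le_pow_right₀ hγ (by nlinarith [hh2])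
      have hbin : (k:ℝ)^(h-1) + ((h-1:ℕ):ℝ) * (k:ℝ)^(h-2)
          ≤ ((k:ℝ)+1)^(h-1) := by
        have := aux_binom_stmt7 (h-1) k
        have hE : h - 1 - 1 = h - 2 := by omega
        rw [hE] at this
        exact_mod_cast this
      have hγpow : (0:ℝ) ≤ γ^(k*h) := by positivity
      have hγpow1 : (0:ℝ) ≤ γ^(k*h+1) := by positivity
      have hk2 : (0:ℝ) ≤ (k:ℝ)^(h-2) := by positivity
      have hk1 : (0:ℝ) ≤ (k:ℝ)^(h-1) := by positivity
      have hcast : ((k+1:ℕ):ℝ) = (k:ℝ) + 1 := by push_cast; ring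
      calc γ * C k h + ∑ h₂ ∈ Finset.Ico 1 h, C k (h - h₂) * C k h₂
          ≤ (k:ℝ)^(h-1) * γ^(k*h+1) + ((h-1:ℕ):ℝ) * ((k:ℝ)^(h-2) * γ^(k*h)) := by
            exact add_le_add hγC hsum
        _ ≤ (k:ℝ)^(h-1) * γ^(k*h+1) + ((h-1:ℕ):ℝ) * ((k:ℝ)^(h-2) * γ^(k*h+1)) := by
            have hcn : (0:ℝ) ≤ ((h-1:ℕ):ℝ) := Nat.cast_nonneg _
            have := mul_le_mul_of_nonneg_left hγmono hk2
            nlinarith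
        _ = ((k:ℝ)^(h-1) + ((h-1:ℕ):ℝ) * (k:ℝ)^(h-2)) * γ^(k*h+1) := by ring
        _ ≤ ((k:ℝ)+1)^(h-1) * γ^(k*h+1) :=
            mul_le_mul_of_nonneg_right hbin hγpow1
        _ ≤ ((k:ℝ)+1)^(h-1) * γ^((k+1)*h) := by
            have : (0:ℝ) ≤ ((k:ℝ)+1)^(h-1) := by positivity
            exact mul_le_mul_of_nonneg_left hγmono2 this
        _ = ((k+1:ℕ):ℝ)^(h-1) * γ^((k+1)*h) := by rw [hcast]
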